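/- Let R ∈ L¹(ℝ) be even with ∫_ℝ R(x) dx = 1, let k ≠ 0 and A, B ∈ ℝ, and set β = ∫_ℝ R(y) cos(2ky) dy. Then for every x ∈ ℝ: ∫_ℝ R(x−y)(B + A sin²(ky)) dy = B + A( (1−β)/2 + β sin²(kx) ). -/
import Mathlib


open MeasureTheory

lemma odd_integral_zero (g : ℝ → ℝ) (hodd : ∀ x, g (-x) = -g x) :
    (∫ x : ℝ, g x) = 0 := by
  have h : (∫ x : ℝ, g (-x)) = ∫ x : ℝ, g x := integral_neg_eq_self g _
  have h2 : (∫ x : ℝ, g (-x)) = ∫ x : ℝ, -g x := by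
    congr 1; ext x; exact hodd x
  rw [integral_neg] at h2
  linarith [h.symm.trans h2]

/-- convolution of an even normalized kernel with `B + A sin²(ky)`:
`∫ R(x−y)(B + A sin²(ky)) dy = B + A((1−β)/2 + β sin²(kx))` where
`β = ∫ R(y) cos(2ky) dy`. -/
theorem convolution_with_sin_squared
    (R : ℝ → ℝ) (hRint : Integrable R) (hReven : ∀ x, R (-x) = R x)
    (hR1 : (∫ x : ℝ, R x) = 1) (k : ℝ) (hk : k ≠ 0) (A B : ℝ)
    (β : ℝ) (hβ : β = ∫ y : ℝ, R y * Real.cos (2 * k * y)) :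
    ∀ x : ℝ, (∫ y : ℝ, R (x - y) * (B + A * Real.sin (k * y) ^ 2)) =
      B + A * ((1 - β) / 2 + β * Real.sin (k * x) ^ 2) := by
  intro x
  -- integrability of translated kernel
  have hRx : Integrable (fun y : ℝ => R (x - y)) := by
    simpa using hRint.comp_sub_left x
  have hRxcos : Integrable (fun y : ℝ => R (x - y) * Real.cos (2 * k * y)) := by
    have := hRx.bdd_mul (c := 1) (f := fun y : ℝ => Real.cos (2 * k * y))
      (Real.continuous_cos.comp (by continuity)).aestronglyMeasurable
      (Filter.Eventually.of_forall (fun y => by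
        simpa using Real.abs_cos_le_one (2 * k * y)))
    simpa [mul_comm] using this
  -- key: ∫ R(x-y) cos(2ky) dy = β cos(2kx)
  have key : (∫ y : ℝ, R (x - y) * Real.cos (2 * k * y)) = β * Real.cos (2 * k * x) := by
    have hsub : (∫ y : ℝ, R (x - y) * Real.cos (2 * k * y))
        = ∫ z : ℝ, R z * Real.cos (2 * k * (x - z)) := by
      have := integral_sub_left_eq_self (fun z : ℝ => R z * Real.cos (2 * k * (x - z)))
        (volume : Measure ℝ) x
      simpa [sub_sub_cancel] using this
    rw [hsub]
    have hexp : ∀ z : ℝ, R z * Real.cos (2 * k * (x - z))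
        = Real.cos (2 * k * x) * (R z * Real.cos (2 * k * z))
          + Real.sin (2 * k * x) * (R z * Real.sin (2 * k * z)) := by
      intro z
      have : 2 * k * (x - z) = 2 * k * x - 2 * k * z := by ring
      rw [this, Real.cos_sub]; ring
    rw [show (∫ z : ℝ, R z * Real.cos (2 * k * (x - z)))
        = ∫ z : ℝ, (Real.cos (2 * k * x) * (R z * Real.cos (2 * k * z))
          + Real.sin (2 * k * x) * (R z * Real.sin (2 * k * z))) from by
      congr 1; ext z; exact hexp z]
    have hRcos : Integrable (fun z : ℝ => R z * Real.cos (2 * k * z)) := by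
      have := hRint.bdd_mul (c := 1) (f := fun z : ℝ => Real.cos (2 * k * z))
        (Real.continuous_cos.comp (by continuity)).aestronglyMeasurable
        (Filter.Eventually.of_forall (fun z => by
          simpa using Real.abs_cos_le_one (2 * k * z)))
      simpa [mul_comm] using this
    have hRsin : Integrable (fun z : ℝ => R z * Real.sin (2 * k * z)) := by
      have := hRint.bdd_mul (c := 1) (f := fun z : ℝ => Real.sin (2 * k * z))
        (Real.continuous_sin.comp (by continuity)).aestronglyMeasurable
        (Filter.Eventually.of_forall (fun z => by
          simpa using Real.abs_sin_le_one (2 * k * z)))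
      simpa [mul_comm] using this
    rw [integral_add (hRcos.const_mul _) (hRsin.const_mul _),
      integral_const_mul, integral_const_mul]
    have hodd : (∫ z : ℝ, R z * Real.sin (2 * k * z)) = 0 := by
      apply odd_integral_zero
      intro z
      rw [hReven z]
      have : 2 * k * (-z) = -(2 * k * z) := by ring
      rw [this, Real.sin_neg]; ring
    rw [hodd, hβ]; ring
  -- main computation
  have hsin : ∀ y : ℝ, B + A * Real.sin (k * y) ^ 2
      = (B + A / 2) - (A / 2) * Real.cos (2 * k * y) := by
    intro y
    have h2 : Real.cos (2 * k * y) = 1 - 2 * Real.sin (k * y) ^ 2 := by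
      rw [show 2 * k * y = 2 * (k * y) from by ring, Real.cos_two_mul,
        Real.cos_sq' (k * y)]
      ring
    rw [h2]; ring
  rw [show (∫ y : ℝ, R (x - y) * (B + A * Real.sin (k * y) ^ 2))
      = ∫ y : ℝ, ((B + A / 2) * R (x - y)
        - (A / 2) * (R (x - y) * Real.cos (2 * k * y))) from by
    congr 1; ext y; rw [hsin y]; ring]
  rw [integral_sub (hRx.const_mul _) (hRxcos.const_mul _), integral_const_mul,
    integral_const_mul, key]
  have hRx1 : (∫ y : ℝ, R (x - y)) = 1 := by
    rw [integral_sub_left_eq_self R (volume : Measure ℝ) x, hR1]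
  rw [hRx1]
  have hc : Real.cos (2 * k * x) = 1 - 2 * Real.sin (k * x) ^ 2 := by
    rw [show 2 * k * x = 2 * (k * x) from by ring, Real.cos_two_mul,
      Real.cos_sq' (k * x)]
    ring
  rw [hc]; ring
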